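/- Let k be a field with char k ≠ 2. If a k-linear subspace V of k⁴ (with coordinates indexed by H) satisfies α₀₁·V ⊆ V, α₁₀·V ⊆ V, β₀₁·V ⊆ V and β₁₀·V ⊆ V, then V = {0} or V = k⁴. (This is the irreducibility of the 4-dimensional weight-1 representation of the Heisenberg group.) -/
import Mathlib


open Matrix

/-- The group `H = (ℤ/2ℤ)²`, with elements written `00, 01, 10, 11`. -/
abbrev H2 : Type := ZMod 2 × ZMod 2

/-- The pairing `⟨x, z⟩ = (−1)^(x₁z₁ + x₂z₂) ∈ k`. -/
def pairing (k : Type*) [Field k] (x z : H2) : k :=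
  (-1 : k) ^ (x.1.val * z.1.val + x.2.val * z.2.val)

/-- `α_x`: the permutation matrix of `z ↦ z + x`, sending `e_z` to `e_{z+x}`. -/
def alphaM (k : Type*) [Field k] (x : H2) : Matrix H2 H2 k :=
  Matrix.of fun i j => if i = j + x then 1 else 0

/-- `β_{x*}`: the diagonal matrix with entry `⟨x*, z⟩` at position `z`. -/
def betaM (k : Type*) [Field k] (xs : H2) : Matrix H2 H2 k :=
  Matrix.diagonal fun z => pairing k xs z

/-- If a `k`-linear subspace `V` of `k⁴` is stable under `α₀₁`, `α₁₀`, `β₀₁` and `β₁₀`,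
then `V = 0` or `V = k⁴`: the 4-dimensional weight-1 representation of the Heisenberg
group is irreducible. -/
lemma H2.add_self' (x : H2) : x + x = 0 := by
  have : ∀ x : H2, x + x = 0 := by decide
  exact this x

lemma betaM_mulVec {k : Type*} [Field k] (xs : H2) (v : H2 → k) :
    (betaM k xs).mulVec v = fun z => pairing k xs z * v z := by
  funext z; simp [betaM, mulVec_diagonal]

lemma alphaM_mulVec {k : Type*} [Field k] (x : H2) (v : H2 → k) :
    (alphaM k x).mulVec v = fun i => v (i + x) := by
  funext i
  have key : ∀ j : H2, (i = j + x) = (j = i + x) := by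
    intro j
    apply propext
    constructor <;> rintro rfl <;> rw [add_assoc, H2.add_self', add_zero]
  simp only [alphaM, mulVec, dotProduct, of_apply, ite_mul, one_mul, zero_mul, key]
  rw [Finset.sum_ite_eq' Finset.univ (i + x) v]
  simp

lemma alphaM_single {k : Type*} [Field k] (x z : H2) :
    (alphaM k x).mulVec (Pi.single z 1) = Pi.single (z + x) (1 : k) := by
  rw [alphaM_mulVec]
  funext i
  have key : (i + x = z) = (i = z + x) := by
    apply propext
    constructor <;> intro h
    · rw [← h, add_assoc, H2.add_self', add_zero]
    · rw [h, add_assoc, H2.add_self', add_zero]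
  simp [Pi.single_apply, key]

theorem statement1 {k : Type*} [Field k] (hchar : ringChar k ≠ 2)
    (V : Submodule k (H2 → k))
    (h1 : ∀ v ∈ V, (alphaM k (0, 1)).mulVec v ∈ V)
    (h2 : ∀ v ∈ V, (alphaM k (1, 0)).mulVec v ∈ V)
    (h3 : ∀ v ∈ V, (betaM k (0, 1)).mulVec v ∈ V)
    (h4 : ∀ v ∈ V, (betaM k (1, 0)).mulVec v ∈ V) :
    V = ⊥ ∨ V = ⊤ := by
  by_cases hV : V = ⊥
  · exact Or.inl hV
  right
  obtain ⟨v, hvV, hv0⟩ := Submodule.ne_bot_iff V |>.mp hV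
  obtain ⟨z, hz⟩ : ∃ z, v z ≠ 0 := Function.ne_iff.mp hv0
  have two_ne : (2 : k) ≠ 0 := Ring.two_ne_zero hchar
  have four_ne : (4 : k) ≠ 0 := by
    have : (4 : k) = 2 * 2 := by norm_num
    rw [this]; exact mul_ne_zero two_ne two_ne
  have m01 : (betaM k (0,1)).mulVec v ∈ V := h3 v hvV
  have m10 : (betaM k (1,0)).mulVec v ∈ V := h4 v hvV
  have m11 : (betaM k (0,1)).mulVec ((betaM k (1,0)).mulVec v) ∈ V := h3 _ m10
  set w : H2 → k := (pairing k (0,0) z) • v + (pairing k (0,1) z) • (betaM k (0,1)).mulVec v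
      + (pairing k (1,0) z) • (betaM k (1,0)).mulVec v
      + (pairing k (1,1) z) • (betaM k (0,1)).mulVec ((betaM k (1,0)).mulVec v) with hwdef
  have hwV : w ∈ V := by
    exact V.add_mem (V.add_mem (V.add_mem (V.smul_mem _ hvV) (V.smul_mem _ m01))
      (V.smul_mem _ m10)) (V.smul_mem _ m11)
  have hw : w = (4 * v z) • (Pi.single z 1 : H2 → k) := by
    funext y
    simp only [hwdef, betaM_mulVec, Pi.add_apply, Pi.smul_apply, smul_eq_mul,
      Pi.single_apply]
    have hcase : ∀ a : ZMod 2, a = 0 ∨ a = 1 := by decide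
    obtain ⟨y1, y2⟩ := y
    obtain ⟨z1, z2⟩ := z
    rcases hcase y1 with rfl | rfl <;> rcases hcase y2 with rfl | rfl <;>
      rcases hcase z1 with rfl | rfl <;> rcases hcase z2 with rfl | rfl <;>
      norm_num [pairing, Prod.ext_iff, show (1 : ZMod 2).val = 1 from rfl] <;> ring
  have hzsingle : Pi.single z (1 : k) ∈ V := by
    have h4vz : (4 * v z) ≠ 0 := mul_ne_zero four_ne hz
    have := V.smul_mem (4 * v z)⁻¹ (hw ▸ hwV)
    rwa [inv_smul_smul₀ h4vz] at this
  have singles : ∀ y : H2, Pi.single y (1 : k) ∈ V := by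
    intro y
    have s01 : Pi.single (z + (0,1)) (1:k) ∈ V := by
      have := h1 _ hzsingle; rwa [alphaM_single] at this
    have s10 : Pi.single (z + (1,0)) (1:k) ∈ V := by
      have := h2 _ hzsingle; rwa [alphaM_single] at this
    have s11 : Pi.single (z + (1,0) + (0,1)) (1:k) ∈ V := by
      have := h1 _ s10; rwa [alphaM_single] at this
    have hcases : ∀ y z : H2, y = z ∨ y = z + (0,1) ∨ y = z + (1,0) ∨ y = z + (1,0) + (0,1) := by
      decide
    rcases hcases y z with rfl | rfl | rfl | rfl
    · exact hzsingle
    · exact s01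
    · exact s10
    · exact s11
  rw [Submodule.eq_top_iff']
  intro u
  have : u = ∑ i : H2, Pi.single i (u i) := (Finset.univ_sum_single u).symm
  rw [this]
  refine Submodule.sum_mem V fun i _ => ?_
  have : Pi.single i (u i) = u i • (Pi.single i (1 : k) : H2 → k) := by
    funext j; simp [Pi.single_apply, mul_comm]
  rw [this]
  exact V.smul_mem _ (singles i)
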